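/- Let W be a symmetric zero-diagonal N×N matrix and N = m+n with m, n ≥ 2. Under the permutation null, E[U_diff] = (m(m−1) − n(n−1))/(N(N−1)) · W_1 and Var(U_diff) = (4mn/(N(N−1))) · W̃_3, where U_diff = U_x − U_y, W_1 = Σ_{i,j} W_{ij}, and W̃_3 = Σ_{i,j,r} W_{ij}W_{ir} − W_1²/N. -/

import Mathlib

open Finset

/-- two-point transitivity of the symmetric group -/
lemma two_trans {α : Type*} [DecidableEq α] {i j i' j' : α} (h : i ≠ j) (h' : i' ≠ j') :
    ∃ σ : Equiv.Perm α, σ i = i' ∧ σ j = j' := by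
  refine ⟨(Equiv.swap (Equiv.swap i i' j) j') * (Equiv.swap i i'), ?_, ?_⟩
  · have ha : Equiv.swap i i' j ≠ i' := by
      intro hh
      apply h
      have : Equiv.swap i i' j = Equiv.swap i i' i := by
        rw [hh, Equiv.swap_apply_left]
      exact ((Equiv.swap i i').injective this).symm
    rw [Equiv.Perm.mul_apply, Equiv.swap_apply_left]
    exact Equiv.swap_apply_of_ne_of_ne (Ne.symm ha) h'
  · rw [Equiv.Perm.mul_apply]
    exact Equiv.swap_apply_left _ _

lemma sum_perm_single {N : ℕ} (i : Fin N) (g : Fin N → ℝ) :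
    (N : ℝ) * ∑ π : Equiv.Perm (Fin N), g (π i) =
      (Fintype.card (Equiv.Perm (Fin N)) : ℝ) * ∑ x, g x := by
  have h1 : ∀ i' : Fin N, ∑ π : Equiv.Perm (Fin N), g (π i') =
      ∑ π : Equiv.Perm (Fin N), g (π i) := by
    intro i'
    exact Fintype.sum_equiv (Equiv.mulRight (Equiv.swap i i'))
      (fun π => g (π i')) (fun π => g (π i))
      (fun π => by simp [Equiv.Perm.mul_apply])
  have h2 : ∑ i' : Fin N, ∑ π : Equiv.Perm (Fin N), g (π i')
      = (N : ℝ) * ∑ π : Equiv.Perm (Fin N), g (π i) := by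
    rw [Finset.sum_congr rfl (fun i' _ => h1 i'), Finset.sum_const, Finset.card_univ,
      Fintype.card_fin, nsmul_eq_mul]
  have h3 : ∑ i' : Fin N, ∑ π : Equiv.Perm (Fin N), g (π i')
      = (Fintype.card (Equiv.Perm (Fin N)) : ℝ) * ∑ x, g x := by
    rw [Finset.sum_comm]
    rw [Finset.sum_congr rfl (fun π _ => Equiv.sum_comp π g)]
    rw [Finset.sum_const, Finset.card_univ, nsmul_eq_mul]
  rw [← h2, h3]

lemma sum_perm_pair {N : ℕ} {i j : Fin N} (hij : i ≠ j) (g : Fin N → Fin N → ℝ) :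
    ((N : ℝ) * ((N : ℝ) - 1)) * ∑ π : Equiv.Perm (Fin N), g (π i) (π j) =
      (Fintype.card (Equiv.Perm (Fin N)) : ℝ) *
        ∑ p ∈ (univ : Finset (Fin N)).offDiag, g p.1 p.2 := by
  have h1 : ∀ p ∈ (univ : Finset (Fin N)).offDiag,
      (∑ π : Equiv.Perm (Fin N), g (π p.1) (π p.2)) =
      ∑ π : Equiv.Perm (Fin N), g (π i) (π j) := by
    intro p hp
    obtain ⟨-, -, hne⟩ := Finset.mem_offDiag.mp hp
    obtain ⟨σ, hs1, hs2⟩ := two_trans hij hne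
    exact Fintype.sum_equiv (Equiv.mulRight σ)
      (fun π => g (π p.1) (π p.2)) (fun π => g (π i) (π j))
      (fun π => by simp [Equiv.Perm.mul_apply, hs1, hs2])
  have h2 : ∑ p ∈ (univ : Finset (Fin N)).offDiag,
        (∑ π : Equiv.Perm (Fin N), g (π p.1) (π p.2))
      = ((N : ℝ) * ((N : ℝ) - 1)) * ∑ π : Equiv.Perm (Fin N), g (π i) (π j) := by
    rw [Finset.sum_congr rfl h1, Finset.sum_const, nsmul_eq_mul, Finset.offDiag_card,
      Finset.card_univ, Fintype.card_fin]
    congr 1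
    have : N ≤ N * N := Nat.le_mul_of_pos_left N i.pos
    push_cast [Nat.cast_sub this]
    ring
  have h3 : ∑ p ∈ (univ : Finset (Fin N)).offDiag,
        (∑ π : Equiv.Perm (Fin N), g (π p.1) (π p.2))
      = (Fintype.card (Equiv.Perm (Fin N)) : ℝ) *
        ∑ p ∈ (univ : Finset (Fin N)).offDiag, g p.1 p.2 := by
    rw [Finset.sum_comm]
    rw [Finset.sum_congr rfl (fun π _ => ?_), Finset.sum_const, Finset.card_univ, nsmul_eq_mul]
    refine Finset.sum_nbij' (fun p => (π p.1, π p.2)) (fun p => (π⁻¹ p.1, π⁻¹ p.2)) ?_ ?_ ?_ ?_ ?_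
    · intro p hp
      obtain ⟨-, -, hne⟩ := Finset.mem_offDiag.mp hp
      exact Finset.mem_offDiag.mpr ⟨Finset.mem_univ _, Finset.mem_univ _,
        fun hc => hne (π.injective hc)⟩
    · intro p hp
      obtain ⟨-, -, hne⟩ := Finset.mem_offDiag.mp hp
      exact Finset.mem_offDiag.mpr ⟨Finset.mem_univ _, Finset.mem_univ _,
        fun hc => hne (π⁻¹.injective hc)⟩
    · intro p _; simp
    · intro p _; simp
    · intro p _; rfl
  rw [← h2, h3]

lemma offDiag_sum_mul {N : ℕ} (c : Fin N → ℝ) :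
    ∑ p ∈ (univ : Finset (Fin N)).offDiag, c p.1 * c p.2
      = (∑ x, c x) ^ 2 - ∑ x, c x * c x := by
  have h : ∑ p ∈ (univ : Finset (Fin N)) ×ˢ univ, c p.1 * c p.2 = (∑ x, c x) ^ 2 := by
    rw [Finset.sum_product, ← Finset.sum_mul_sum, sq]
  rw [← Finset.diag_union_offDiag, Finset.sum_union (Finset.disjoint_diag_offDiag _),
    Finset.sum_diag] at h
  linarith

lemma card_filter_lt_fin {N m : ℕ} (hm : m ≤ N) :
    ((univ : Finset (Fin N)).filter (fun x : Fin N => (x : ℕ) < m)).card = m := by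
  rw [Finset.card_filter]
  rw [Fin.sum_univ_eq_sum_range (fun k => if k < m then 1 else 0) N]
  rw [← Finset.card_filter]
  have : (Finset.range N).filter (fun k => k < m) = Finset.range m := by
    ext k
    simp only [Finset.mem_filter, Finset.mem_range]
    omega
  rw [this, Finset.card_range]

/-- Expectation under the uniform distribution on permutations of `Fin N`. -/
noncomputable def pE {N : ℕ} (f : Equiv.Perm (Fin N) → ℝ) : ℝ :=
  (∑ π : Equiv.Perm (Fin N), f π) / (Fintype.card (Equiv.Perm (Fin N)) : ℝ)

/-- Covariance under the uniform distribution on permutations of `Fin N`. -/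
noncomputable def pCov {N : ℕ} (f g : Equiv.Perm (Fin N) → ℝ) : ℝ :=
  pE (fun π => (f π - pE f) * (g π - pE g))

lemma pCov_eq {N : ℕ} (f g : Equiv.Perm (Fin N) → ℝ) :
    pCov f g = pE (fun π => f π * g π) - pE f * pE g := by
  have hC : (Fintype.card (Equiv.Perm (Fin N)) : ℝ) ≠ 0 := by
    exact_mod_cast Fintype.card_ne_zero
  set C := (Fintype.card (Equiv.Perm (Fin N)) : ℝ) with hCdef
  set a := pE f with ha
  set b := pE g with hb
  have expand : ∑ π : Equiv.Perm (Fin N), (f π - a) * (g π - b)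
      = (∑ π : Equiv.Perm (Fin N), f π * g π)
        - (a * ∑ π : Equiv.Perm (Fin N), g π + b * ∑ π : Equiv.Perm (Fin N), f π
            - C * (a * b)) := by
    rw [Finset.sum_congr rfl (fun π _ => show (f π - a) * (g π - b)
        = f π * g π - (a * g π + b * f π - a * b) from by ring)]
    rw [Finset.sum_sub_distrib, Finset.sum_sub_distrib, Finset.sum_add_distrib,
      ← Finset.mul_sum, ← Finset.mul_sum, Finset.sum_const, Finset.card_univ, nsmul_eq_mul]
  rw [pCov, pE, expand]
  rw [pE, ← hCdef] at ha hb ⊢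
  rw [ha, hb]
  field_simp
  ring

/-- Within-first-group sum: sums `W i j` over pairs both assigned to the first `m` labels. -/
noncomputable def Ux {N : ℕ} (W : Matrix (Fin N) (Fin N) ℝ) (m : ℕ)
    (π : Equiv.Perm (Fin N)) : ℝ :=
  ∑ i, ∑ j, if (π i : ℕ) < m ∧ (π j : ℕ) < m then W i j else 0

/-- Within-second-group sum: sums `W i j` over pairs both assigned to labels `> m`. -/
noncomputable def Uy {N : ℕ} (W : Matrix (Fin N) (Fin N) ℝ) (m : ℕ)
    (π : Equiv.Perm (Fin N)) : ℝ :=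
  ∑ i, ∑ j, if m ≤ (π i : ℕ) ∧ m ≤ (π j : ℕ) then W i j else 0

lemma Udiff_eq {N m : ℕ} (W : Matrix (Fin N) (Fin N) ℝ) (hsym : W.IsSymm)
    (π : Equiv.Perm (Fin N)) :
    Ux W m π - Uy W m π =
      ∑ i, (∑ j, W i j) * (if (π i : ℕ) < m then (1 : ℝ) else -1) := by
  have key : ∀ i j : Fin N,
      (if (π i : ℕ) < m ∧ (π j : ℕ) < m then W i j else 0)
        - (if m ≤ (π i : ℕ) ∧ m ≤ (π j : ℕ) then W i j else 0)
      = W i j * ((if (π i : ℕ) < m then (1 : ℝ) else -1) / 2)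
        + W i j * ((if (π j : ℕ) < m then (1 : ℝ) else -1) / 2) := by
    intro i j
    split_ifs <;> first | (exfalso; omega) | ring
  have h0 : Ux W m π - Uy W m π
      = (∑ i, ∑ j, W i j * ((if (π i : ℕ) < m then (1 : ℝ) else -1) / 2))
        + ∑ i, ∑ j, W i j * ((if (π j : ℕ) < m then (1 : ℝ) else -1) / 2) := by
    rw [Ux, Uy, ← Finset.sum_sub_distrib, ← Finset.sum_add_distrib]
    refine Finset.sum_congr rfl fun i _ => ?_
    rw [← Finset.sum_sub_distrib, ← Finset.sum_add_distrib]
    exact Finset.sum_congr rfl fun j _ => key i j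
  have h1 : ∑ i, ∑ j, W i j * ((if (π i : ℕ) < m then (1 : ℝ) else -1) / 2)
      = ∑ i, (∑ j, W i j) * ((if (π i : ℕ) < m then (1 : ℝ) else -1) / 2) :=
    Finset.sum_congr rfl fun i _ => (Finset.sum_mul _ _ _).symm
  have h2 : ∑ i, ∑ j, W i j * ((if (π j : ℕ) < m then (1 : ℝ) else -1) / 2)
      = ∑ j, (∑ i, W j i) * ((if (π j : ℕ) < m then (1 : ℝ) else -1) / 2) := by
    rw [Finset.sum_comm]
    refine Finset.sum_congr rfl fun j _ => ?_
    rw [← Finset.sum_mul]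
    congr 1
    exact Finset.sum_congr rfl fun i _ => hsym.apply j i
  rw [h0, h1, h2, ← Finset.sum_add_distrib]
  exact Finset.sum_congr rfl fun i _ => by ring
theorem stmt_15 (m n N : ℕ) (hm : 2 ≤ m) (hn : 2 ≤ n) (hN : N = m + n)
    (W : Matrix (Fin N) (Fin N) ℝ) (hsym : W.IsSymm) (hdiag : ∀ i, W i i = 0) :
    pE (fun π => Ux W m π - Uy W m π) =
        ((m : ℝ) * ((m : ℝ) - 1) - (n : ℝ) * ((n : ℝ) - 1)) / ((N : ℝ) * ((N : ℝ) - 1))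
          * (∑ i, ∑ j, W i j)
    ∧ pCov (fun π => Ux W m π - Uy W m π) (fun π => Ux W m π - Uy W m π) =
        (4 * (m : ℝ) * (n : ℝ) / ((N : ℝ) * ((N : ℝ) - 1))) *
          ((∑ i, ∑ j, ∑ r, W i j * W i r)
            - (∑ i, ∑ j, W i j) ^ 2 / (N : ℝ)) := by
  have hNR : (N : ℝ) = (m : ℝ) + (n : ℝ) := by rw [hN]; push_cast; ring
  have hmn0 : (m : ℝ) + (n : ℝ) ≠ 0 := by positivity
  have hm1 : (1 : ℝ) ≤ (m : ℝ) := by exact_mod_cast Nat.one_le_of_lt hm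
  have hn1 : (1 : ℝ) ≤ (n : ℝ) := by exact_mod_cast Nat.one_le_of_lt hn
  have hmn1 : (m : ℝ) + (n : ℝ) - 1 ≠ 0 := by intro h; linarith
  have hN0 : (N : ℝ) ≠ 0 := by rw [hNR]; exact hmn0
  have hN1 : (N : ℝ) - 1 ≠ 0 := by rw [hNR]; exact hmn1
  have hNN1 : (N : ℝ) * ((N : ℝ) - 1) ≠ 0 := mul_ne_zero hN0 hN1
  have hC : (Fintype.card (Equiv.Perm (Fin N)) : ℝ) ≠ 0 := by
    exact_mod_cast Fintype.card_ne_zero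
  set C := (Fintype.card (Equiv.Perm (Fin N)) : ℝ) with hCdef
  set d : Fin N → ℝ := fun x => if (x : ℕ) < m then (1 : ℝ) else -1 with hd
  -- basic sums of d
  have hdS : ∑ x : Fin N, d x = (m : ℝ) - (n : ℝ) := by
    rw [hd]
    rw [Finset.sum_ite (fun _ => (1:ℝ)) (fun _ => (-1:ℝ))]
    rw [Finset.sum_const, Finset.sum_const, nsmul_eq_mul, nsmul_eq_mul]
    rw [card_filter_lt_fin (by omega : m ≤ N)]
    have htot := Finset.card_filter_add_card_filter_not
      (s := (univ : Finset (Fin N))) (p := fun x : Fin N => (x : ℕ) < m)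
    rw [Finset.card_univ, Fintype.card_fin, card_filter_lt_fin (by omega : m ≤ N)] at htot
    have hcn : ((univ : Finset (Fin N)).filter (fun x : Fin N => ¬ (x : ℕ) < m)).card = n := by
      omega
    rw [hcn]
    push_cast
    ring
  have hdQ : ∑ x : Fin N, d x * d x = (N : ℝ) := by
    have h1 : ∀ x : Fin N, d x * d x = 1 := by
      intro x; rw [hd]; simp only; split_ifs <;> norm_num
    rw [Finset.sum_congr rfl fun x _ => h1 x, Finset.sum_const, Finset.card_univ,
      Fintype.card_fin, nsmul_eq_mul, mul_one]
  -- permutation sums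
  have hEd : ∀ i : Fin N, ∑ π : Equiv.Perm (Fin N), d (π i)
      = C * ((m : ℝ) - (n : ℝ)) / (N : ℝ) := by
    intro i
    have h := sum_perm_single i d
    rw [hdS, ← hCdef] at h
    rw [eq_div_iff hN0]
    linarith
  have hEd2 : ∀ i : Fin N, ∑ π : Equiv.Perm (Fin N), d (π i) * d (π i) = C := by
    intro i
    have h := sum_perm_single i (fun x => d x * d x)
    rw [hdQ, ← hCdef] at h
    exact mul_left_cancel₀ hN0 (by linarith)
  have hEdd : ∀ p ∈ (univ : Finset (Fin N)).offDiag,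
      ∑ π : Equiv.Perm (Fin N), d (π p.1) * d (π p.2)
        = C * ((((m : ℝ) - (n : ℝ)) ^ 2 - (N : ℝ)) / ((N : ℝ) * ((N : ℝ) - 1))) := by
    intro p hp
    obtain ⟨-, -, hne⟩ := Finset.mem_offDiag.mp hp
    have h := sum_perm_pair hne (fun x y => d x * d y)
    rw [offDiag_sum_mul d, hdS, hdQ, ← hCdef] at h
    rw [mul_div_assoc'] at *
    rw [eq_div_iff hNN1]
    linarith
  -- the statistic as a linear permutation statistic
  have hU : ∀ π : Equiv.Perm (Fin N), Ux W m π - Uy W m π = ∑ i, (∑ j, W i j) * d (π i) :=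
    fun π => Udiff_eq W hsym π
  -- mean
  have hFsum : ∑ π : Equiv.Perm (Fin N), (Ux W m π - Uy W m π)
      = (∑ i, ∑ j, W i j) * (C * ((m : ℝ) - (n : ℝ)) / (N : ℝ)) := by
    calc ∑ π : Equiv.Perm (Fin N), (Ux W m π - Uy W m π)
        = ∑ π : Equiv.Perm (Fin N), ∑ i, (∑ j, W i j) * d (π i) :=
          Finset.sum_congr rfl fun π _ => hU π
      _ = ∑ i, ∑ π : Equiv.Perm (Fin N), (∑ j, W i j) * d (π i) := Finset.sum_comm
      _ = ∑ i, (∑ j, W i j) * (C * ((m : ℝ) - (n : ℝ)) / (N : ℝ)) :=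
          Finset.sum_congr rfl fun i _ => by rw [← Finset.mul_sum, hEd i]
      _ = (∑ i, ∑ j, W i j) * (C * ((m : ℝ) - (n : ℝ)) / (N : ℝ)) := by
          rw [Finset.sum_mul]
  have hpEF : pE (fun π => Ux W m π - Uy W m π)
      = (∑ i, ∑ j, W i j) * ((m : ℝ) - (n : ℝ)) / (N : ℝ) := by
    rw [pE, ← hCdef, hFsum]
    field_simp
  -- second moment
  have hF2sum : ∑ π : Equiv.Perm (Fin N), ((Ux W m π - Uy W m π) * (Ux W m π - Uy W m π))
      = (∑ i, (∑ j, W i j) * (∑ j, W i j)) * C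
        + ((∑ i, ∑ j, W i j) ^ 2 - ∑ i, (∑ j, W i j) * (∑ j, W i j))
            * (C * ((((m : ℝ) - (n : ℝ)) ^ 2 - (N : ℝ)) / ((N : ℝ) * ((N : ℝ) - 1)))) := by
    calc ∑ π : Equiv.Perm (Fin N), ((Ux W m π - Uy W m π) * (Ux W m π - Uy W m π))
        = ∑ π : Equiv.Perm (Fin N), ∑ p ∈ (univ : Finset (Fin N)) ×ˢ univ,
            ((∑ j, W p.1 j) * (∑ j, W p.2 j)) * (d (π p.1) * d (π p.2)) := by
          refine Finset.sum_congr rfl fun π _ => ?_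
          rw [hU π, Finset.sum_mul_sum, Finset.sum_product]
          exact Finset.sum_congr rfl fun i _ => Finset.sum_congr rfl fun j _ => by ring
      _ = ∑ p ∈ (univ : Finset (Fin N)) ×ˢ univ,
            ((∑ j, W p.1 j) * (∑ j, W p.2 j)) * ∑ π : Equiv.Perm (Fin N), d (π p.1) * d (π p.2) := by
          rw [Finset.sum_comm]
          exact Finset.sum_congr rfl fun p _ => (Finset.mul_sum _ _ _).symm
      _ = (∑ a, ((∑ j, W a j) * (∑ j, W a j)) * ∑ π : Equiv.Perm (Fin N), d (π a) * d (π a))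
          + ∑ p ∈ (univ : Finset (Fin N)).offDiag,
              ((∑ j, W p.1 j) * (∑ j, W p.2 j)) * ∑ π : Equiv.Perm (Fin N), d (π p.1) * d (π p.2) := by
          rw [← Finset.diag_union_offDiag, Finset.sum_union (Finset.disjoint_diag_offDiag _),
            Finset.sum_diag]
      _ = (∑ i, (∑ j, W i j) * (∑ j, W i j)) * C
          + ((∑ i, ∑ j, W i j) ^ 2 - ∑ i, (∑ j, W i j) * (∑ j, W i j))
              * (C * ((((m : ℝ) - (n : ℝ)) ^ 2 - (N : ℝ)) / ((N : ℝ) * ((N : ℝ) - 1)))) := by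
          congr 1
          · rw [Finset.sum_congr rfl fun a _ => by rw [hEd2 a], ← Finset.sum_mul]
          · rw [Finset.sum_congr rfl fun p hp => by rw [hEdd p hp], ← Finset.sum_mul,
              offDiag_sum_mul (fun i => ∑ j, W i j)]
  have hpEF2 : pE (fun π => (Ux W m π - Uy W m π) * (Ux W m π - Uy W m π))
      = (∑ i, (∑ j, W i j) * (∑ j, W i j))
        + ((∑ i, ∑ j, W i j) ^ 2 - ∑ i, (∑ j, W i j) * (∑ j, W i j))
            * ((((m : ℝ) - (n : ℝ)) ^ 2 - (N : ℝ)) / ((N : ℝ) * ((N : ℝ) - 1))) := by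
    rw [pE, ← hCdef, hF2sum]
    field_simp
  have hQ : (∑ i, ∑ j, ∑ r, W i j * W i r) = ∑ i, (∑ j, W i j) * (∑ j, W i j) :=
    Finset.sum_congr rfl fun i _ => (Finset.sum_mul_sum _ _ _ _).symm
  constructor
  · rw [hpEF, hNR]
    field_simp
    ring
  · rw [pCov_eq, hpEF2, hpEF, hQ, hNR]
    field_simp
    ring
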